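/- arXiv:2505.24657 — 4 statements merged into one kernel-verified Lean document; each statement's English description precedes it below -/
import Mathlib

section
/- Let (X,d) be a compact metric space and let (X, f_{1,∞}) be a non-autonomous discrete system. If f_{1,∞} is multi-transitive, then for every m ∈ ℕ and every collection of nonempty open subsets U_1, …, U_m, V_1, …, V_m of X, the set {l ∈ ℕ : f_1^{lj}(U_j) ∩ V_j ≠ ∅ for all j = 1, …, m} is infinite. -/
open Set Filter

/-- `nds f i n` is the `n`-step composition `f_i^n = f (i+n-1) ∘ ⋯ ∘ f i`, with `nds f i 0 = id`. -/
def nds {X : Type*} (f : ℕ → X → X) (i : ℕ) : ℕ → X → X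
  | 0 => id
  | n + 1 => f (i + n) ∘ nds f i n

section TopDefs

variable {X : Type*} [TopologicalSpace X]

/-- The NDS `f_{1,∞}` is (topologically) transitive. -/
def NDSTransitive (f : ℕ → X → X) : Prop :=
  ∀ U V : Set X, IsOpen U → U.Nonempty → IsOpen V → V.Nonempty →
    ∃ n : ℕ, 0 < n ∧ (nds f 1 n '' U ∩ V).Nonempty

/-- The NDS `f_{1,∞}` is mixing. -/
def NDSMixing (f : ℕ → X → X) : Prop :=
  ∀ U V : Set X, IsOpen U → U.Nonempty → IsOpen V → V.Nonempty →
    ∃ N : ℕ, ∀ n : ℕ, N ≤ n → (nds f 1 n '' U ∩ V).Nonempty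

/-- The NDS `f_{1,∞}` is weakly mixing. -/
def NDSWeaklyMixing (f : ℕ → X → X) : Prop :=
  ∀ U₁ U₂ V₁ V₂ : Set X, IsOpen U₁ → U₁.Nonempty → IsOpen U₂ → U₂.Nonempty →
    IsOpen V₁ → V₁.Nonempty → IsOpen V₂ → V₂.Nonempty →
    ∃ n : ℕ, 0 < n ∧ (nds f 1 n '' U₁ ∩ V₁).Nonempty ∧ (nds f 1 n '' U₂ ∩ V₂).Nonempty

/-- The NDS `f_{1,∞}` is multi-transitive. -/
def NDSMultiTransitive (f : ℕ → X → X) : Prop :=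
  ∀ m : ℕ, 0 < m → ∀ U V : Fin m → Set X,
    (∀ j, IsOpen (U j)) → (∀ j, (U j).Nonempty) →
    (∀ j, IsOpen (V j)) → (∀ j, (V j).Nonempty) →
    ∃ l : ℕ, 0 < l ∧ ∀ j : Fin m, (nds f 1 (l * (j.1 + 1)) '' U j ∩ V j).Nonempty

/-- The NDS `f_{1,∞}` is totally transitive. -/
def NDSTotallyTransitive (f : ℕ → X → X) : Prop :=
  ∀ k : ℕ, 0 < k → ∀ U V : Set X, IsOpen U → U.Nonempty → IsOpen V → V.Nonempty →
    ∃ n : ℕ, 0 < n ∧ (nds f 1 (n * k) '' U ∩ V).Nonempty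

/-- The NDS `f_{1,∞}` is minimal: every orbit is dense. -/
def NDSMinimal (f : ℕ → X → X) : Prop :=
  ∀ x : X, Dense (Set.range fun n : ℕ => nds f 1 n x)

/-- The NDS `f_{1,∞}` is feeble open. -/
def FeebleOpen (f : ℕ → X → X) : Prop :=
  ∀ i : ℕ, 1 ≤ i → ∀ U : Set X, IsOpen U → U.Nonempty → (interior (f i '' U)).Nonempty

/-- A set of positive integers is syndetic (has bounded gaps). -/
def SyndeticSet (A : Set ℕ) : Prop :=
  ∃ M : ℕ, ∀ i : ℕ, 1 ≤ i → ∃ j ∈ A, i ≤ j ∧ j ≤ i + M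

/-- A set of positive integers is thick (contains arbitrarily long runs). -/
def ThickSet (A : Set ℕ) : Prop :=
  ∀ p : ℕ, ∃ n : ℕ, ∀ j : ℕ, n ≤ j → j ≤ n + p → j ∈ A

/-- The NDS `f_{1,∞}` is syndetically transitive. -/
def NDSSyndeticallyTransitive (f : ℕ → X → X) : Prop :=
  ∀ U V : Set X, IsOpen U → U.Nonempty → IsOpen V → V.Nonempty →
    SyndeticSet {n : ℕ | 0 < n ∧ (nds f 1 n '' U ∩ V).Nonempty}

/-- The NDS `f_{1,∞}` has dense periodic points. -/
def NDSDensePeriodicPoints (f : ℕ → X → X) : Prop :=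
  Dense {x : X | ∃ k : ℕ, 0 < k ∧ ∀ n : ℕ, 0 < n → nds f 1 (k * n) x = x}

/-- The NDS `f_{k,∞}` is strongly transitive. -/
def NDSStronglyTransitiveFrom (f : ℕ → X → X) (k : ℕ) : Prop :=
  ∀ U : Set X, IsOpen U → U.Nonempty →
    ∃ M : ℕ, 0 < M ∧ (⋃ i ∈ Set.Icc 1 M, nds f k i '' U) = Set.univ

/-- An autonomous map is transitive. -/
def MapTransitive {Y : Type*} [TopologicalSpace Y] (g : Y → Y) : Prop :=
  ∀ U V : Set Y, IsOpen U → U.Nonempty → IsOpen V → V.Nonempty →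
    ∃ n : ℕ, 0 < n ∧ (g^[n] '' U ∩ V).Nonempty

/-- An autonomous map is weakly mixing. -/
def MapWeaklyMixing {Y : Type*} [TopologicalSpace Y] (g : Y → Y) : Prop :=
  ∀ U₁ U₂ V₁ V₂ : Set Y, IsOpen U₁ → U₁.Nonempty → IsOpen U₂ → U₂.Nonempty →
    IsOpen V₁ → V₁.Nonempty → IsOpen V₂ → V₂.Nonempty →
    ∃ n : ℕ, 0 < n ∧ (g^[n] '' U₁ ∩ V₁).Nonempty ∧ (g^[n] '' U₂ ∩ V₂).Nonempty

/-- An autonomous map is totally transitive. -/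
def MapTotallyTransitive {Y : Type*} [TopologicalSpace Y] (g : Y → Y) : Prop :=
  ∀ k : ℕ, 0 < k → ∀ U V : Set Y, IsOpen U → U.Nonempty → IsOpen V → V.Nonempty →
    ∃ n : ℕ, 0 < n ∧ (g^[n * k] '' U ∩ V).Nonempty

/-- An autonomous map is syndetically transitive. -/
def MapSyndeticallyTransitive {Y : Type*} [TopologicalSpace Y] (g : Y → Y) : Prop :=
  ∀ U V : Set Y, IsOpen U → U.Nonempty → IsOpen V → V.Nonempty →
    SyndeticSet {n : ℕ | 0 < n ∧ (g^[n] '' U ∩ V).Nonempty}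

/-- An autonomous map is minimal. -/
def MapMinimal {Y : Type*} [TopologicalSpace Y] (g : Y → Y) : Prop :=
  ∀ x : Y, Dense (Set.range fun n : ℕ => g^[n] x)

end TopDefs

section MetricDefs

variable {X : Type*} [MetricSpace X]

/-- The compositions `(f_r^k)` converge collectively to `(f^k)` (w.r.t. the supremum metric). -/
def CollectivelyConverges (f : ℕ → X → X) (g : X → X) : Prop :=
  ∀ ε : ℝ, 0 < ε → ∃ r₀ : ℕ, ∀ r : ℕ, r₀ ≤ r → ∀ k : ℕ, 1 ≤ k → ∀ x : X,
    dist (nds f r k x) (g^[k] x) < ε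

/-- `N(U, δ)`: the times at which the NDS is `δ`-sensitive on `U`. -/
def SensSet (f : ℕ → X → X) (U : Set X) (δ : ℝ) : Set ℕ :=
  {n : ℕ | 0 < n ∧ ∃ x ∈ U, ∃ y ∈ U, δ < dist (nds f 1 n x) (nds f 1 n y)}

/-- The NDS `f_{1,∞}` is multi-sensitive. -/
def NDSMultiSensitive (f : ℕ → X → X) : Prop :=
  ∃ δ : ℝ, 0 < δ ∧ ∀ m : ℕ, 0 < m → ∀ U : Fin m → Set X,
    (∀ i, IsOpen (U i)) → (∀ i, (U i).Nonempty) → (⋂ i, SensSet f (U i) δ).Nonempty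

/-- The NDS `f_{1,∞}` is thickly sensitive. -/
def NDSThicklySensitive (f : ℕ → X → X) : Prop :=
  ∃ δ : ℝ, 0 < δ ∧ ∀ U : Set X, IsOpen U → U.Nonempty → ThickSet (SensSet f U δ)

/-- The NDS `f_{1,∞}` is syndetically sensitive. -/
def NDSSyndeticallySensitive (f : ℕ → X → X) : Prop :=
  ∃ δ : ℝ, 0 < δ ∧ ∀ U : Set X, IsOpen U → U.Nonempty → SyndeticSet (SensSet f U δ)

/-- The NDS `f_{1,∞}` is mildly mixing: its product with every transitive NDS on a compact
metric space is transitive. -/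
def NDSMildlyMixing (f : ℕ → X → X) : Prop :=
  ∀ (Y : Type*) [MetricSpace Y] [CompactSpace Y] (g : ℕ → Y → Y),
    (∀ n : ℕ, 1 ≤ n → Continuous (g n)) → NDSTransitive g →
    NDSTransitive (fun n (p : X × Y) => (f n p.1, g n p.2))

/-- The NDS `f_{1,∞}` is Li–Yorke chaotic. -/
def LiYorkeChaotic (f : ℕ → X → X) : Prop :=
  ∃ S : Set X, ¬S.Countable ∧ ∀ x ∈ S, ∀ y ∈ S, x ≠ y →
    Filter.liminf (fun n : ℕ => dist (nds f 1 n x) (nds f 1 n y)) Filter.atTop = 0 ∧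
    0 < Filter.limsup (fun n : ℕ => dist (nds f 1 n x) (nds f 1 n y)) Filter.atTop

end MetricDefs

theorem multiTransitive_hitting_sets_infinite {X : Type*} [MetricSpace X] [CompactSpace X]
    (f : ℕ → X → X) (hcont : ∀ n : ℕ, 1 ≤ n → Continuous (f n))
    (hmt : NDSMultiTransitive f) :
    ∀ m : ℕ, 0 < m → ∀ U V : Fin m → Set X,
      (∀ j, IsOpen (U j)) → (∀ j, (U j).Nonempty) →
      (∀ j, IsOpen (V j)) → (∀ j, (V j).Nonempty) →
      {l : ℕ | 0 < l ∧ ∀ j : Fin m,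
        (nds f 1 (l * (j.1 + 1)) '' U j ∩ V j).Nonempty}.Infinite := by
  classical
  intro m hm U V hUo hUne hVo hVne
  obtain ⟨x₀, _⟩ := hUne ⟨0, hm⟩
  haveI : Nonempty X := ⟨x₀⟩
  apply Set.infinite_of_forall_exists_gt
  intro N
  set M := m * (N + 1) with hMdef
  have hM : 0 < M := Nat.mul_pos hm (Nat.succ_pos N)
  set U' : Fin M → Set X := fun i =>
    if h : ∃ j : Fin m, (j.1 + 1) * (N + 1) = i.1 + 1 then U h.choose else Set.univ with hU'
  set V' : Fin M → Set X := fun i =>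
    if h : ∃ j : Fin m, (j.1 + 1) * (N + 1) = i.1 + 1 then V h.choose else Set.univ with hV'
  obtain ⟨l, hl, hall⟩ := hmt M hM U' V'
    (fun i => by by_cases h : ∃ j : Fin m, (j.1 + 1) * (N + 1) = i.1 + 1 <;>
      simp only [hU', h, dif_pos, dif_neg, not_false_iff] <;> first | exact hUo _ | exact isOpen_univ)
    (fun i => by by_cases h : ∃ j : Fin m, (j.1 + 1) * (N + 1) = i.1 + 1 <;>
      simp only [hU', h, dif_pos, dif_neg, not_false_iff] <;>
        first | exact hUne _ | exact Set.univ_nonempty)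
    (fun i => by by_cases h : ∃ j : Fin m, (j.1 + 1) * (N + 1) = i.1 + 1 <;>
      simp only [hV', h, dif_pos, dif_neg, not_false_iff] <;> first | exact hVo _ | exact isOpen_univ)
    (fun i => by by_cases h : ∃ j : Fin m, (j.1 + 1) * (N + 1) = i.1 + 1 <;>
      simp only [hV', h, dif_pos, dif_neg, not_false_iff] <;>
        first | exact hVne _ | exact Set.univ_nonempty)
  refine ⟨l * (N + 1), ⟨Nat.mul_pos hl (Nat.succ_pos N), ?_⟩, ?_⟩
  · intro j
    have hjb : (j.1 + 1) * (N + 1) - 1 < M := by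
      have h1 : (j.1 + 1) * (N + 1) ≤ m * (N + 1) :=
        Nat.mul_le_mul_right _ (Nat.succ_le_of_lt j.2)
      have h2 : 0 < (j.1 + 1) * (N + 1) := Nat.mul_pos (Nat.succ_pos _) (Nat.succ_pos _)
      omega
    set i : Fin M := ⟨(j.1 + 1) * (N + 1) - 1, hjb⟩ with hidef
    have hi1 : i.1 + 1 = (j.1 + 1) * (N + 1) := by
      have h2 : 0 < (j.1 + 1) * (N + 1) := Nat.mul_pos (Nat.succ_pos _) (Nat.succ_pos _)
      simp only [hidef]
      omega
    have hex : ∃ j' : Fin m, (j'.1 + 1) * (N + 1) = i.1 + 1 := ⟨j, hi1.symm⟩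
    have hspec : (hex.choose.1 + 1) * (N + 1) = i.1 + 1 := hex.choose_spec
    have hcj : hex.choose = j := by
      have : (hex.choose.1 + 1) * (N + 1) = (j.1 + 1) * (N + 1) := by rw [hspec, hi1]
      have h3 : hex.choose.1 + 1 = j.1 + 1 :=
        Nat.eq_of_mul_eq_mul_right (Nat.succ_pos N) this
      exact Fin.ext (by omega)
    have h := hall i
    rw [hU', hV'] at h
    simp only [dif_pos hex, hcj] at h
    have harith : l * (i.1 + 1) = l * (N + 1) * (j.1 + 1) := by rw [hi1]; ring
    rwa [harith] at h
  · have : 1 ≤ l := hl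
    calc N < N + 1 := Nat.lt_succ_self N
    _ ≤ l * (N + 1) := Nat.le_mul_of_pos_left _ hl
end

section
/- Let (X,d) be a compact metric space and let (X, f_{1,∞}) be a non-autonomous discrete system. If f_{1,∞} is weakly mixing, then for every collection of nonempty open subsets U_1, U_2, V_1, V_2 of X, the set {n ∈ ℕ : f_1^n(U_1) ∩ V_1 ≠ ∅ and f_1^n(U_2) ∩ V_2 ≠ ∅} is infinite. -/
open Set Filter

lemma nds_continuous {X : Type*} [TopologicalSpace X] (f : ℕ → X → X)
    (hcont : ∀ n : ℕ, 1 ≤ n → Continuous (f n)) (n : ℕ) : Continuous (nds f 1 n) := by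
  induction n with
  | zero => exact continuous_id
  | succ k ih => exact (hcont (1 + k) (Nat.le_add_right 1 k)).comp ih

/-- If `X` has two distinct points and `f` is weakly mixing, every nonempty open set
contains a point different from any given `y`. -/
lemma exists_ne_of_wm {X : Type*} [MetricSpace X] (f : ℕ → X → X)
    (hwm : NDSWeaklyMixing f) {a b : X} (hab : a ≠ b) {V : Set X} (hV : IsOpen V)
    (hVne : V.Nonempty) (y : X) : ∃ v ∈ V, v ≠ y := by
  by_contra h
  push_neg at h
  obtain ⟨W₁, W₂, hW₁, hW₂, haW, hbW, hdis⟩ := t2_separation hab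
  obtain ⟨n, -, ⟨z₁, ⟨u₁, hu₁, rfl⟩, hz₁⟩, ⟨z₂, ⟨u₂, hu₂, rfl⟩, hz₂⟩⟩ :=
    hwm V V W₁ W₂ hV hVne hV hVne hW₁ ⟨a, haW⟩ hW₂ ⟨b, hbW⟩
  rw [h u₁ hu₁] at hz₁
  rw [h u₂ hu₂] at hz₂
  exact hdis.ne_of_mem hz₁ hz₂ rfl

/-- Kill one time `n`: shrink `U, V` so the hit at time `n` disappears. -/
lemma kill_one {X : Type*} [MetricSpace X] (f : ℕ → X → X)
    (hcont : ∀ n : ℕ, 1 ≤ n → Continuous (f n))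
    (hwm : NDSWeaklyMixing f) {a b : X} (hab : a ≠ b) (n : ℕ)
    {U V : Set X} (hU : IsOpen U) (hUne : U.Nonempty) (hV : IsOpen V) (hVne : V.Nonempty) :
    ∃ U' V', IsOpen U' ∧ U'.Nonempty ∧ U' ⊆ U ∧ IsOpen V' ∧ V'.Nonempty ∧ V' ⊆ V ∧
      nds f 1 n '' U' ∩ V' = ∅ := by
  obtain ⟨x₀, hx₀⟩ := hUne
  set y := nds f 1 n x₀ with hy
  obtain ⟨v, hvV, hvy⟩ := exists_ne_of_wm f hwm hab hV hVne y
  set r := dist v y / 2 with hr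
  have hd : 0 < dist v y := dist_pos.mpr hvy
  have hrpos : 0 < r := by positivity
  refine ⟨U ∩ (nds f 1 n) ⁻¹' (Metric.closedBall v r)ᶜ, V ∩ Metric.ball v r,
    hU.inter ((Metric.isClosed_closedBall.isOpen_compl).preimage (nds_continuous f hcont n)),
    ⟨x₀, hx₀, ?_⟩, Set.inter_subset_left,
    hV.inter Metric.isOpen_ball, ⟨v, hvV, Metric.mem_ball_self hrpos⟩,
    Set.inter_subset_left, ?_⟩
  · simp only [Set.mem_preimage, Set.mem_compl_iff, Metric.mem_closedBall, ← hy]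
    rw [dist_comm]
    linarith
  · apply Set.eq_empty_of_forall_notMem
    rintro z ⟨⟨u, hu, rfl⟩, -, hzb⟩
    exact hu.2 (Metric.ball_subset_closedBall hzb)

/-- Kill all times in a finite set. -/
lemma kill_all {X : Type*} [MetricSpace X] (f : ℕ → X → X)
    (hcont : ∀ n : ℕ, 1 ≤ n → Continuous (f n))
    (hwm : NDSWeaklyMixing f) {a b : X} (hab : a ≠ b) (T : Finset ℕ)
    {U V : Set X} (hU : IsOpen U) (hUne : U.Nonempty) (hV : IsOpen V) (hVne : V.Nonempty) :
    ∃ U' V', IsOpen U' ∧ U'.Nonempty ∧ U' ⊆ U ∧ IsOpen V' ∧ V'.Nonempty ∧ V' ⊆ V ∧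
      ∀ n ∈ T, nds f 1 n '' U' ∩ V' = ∅ := by
  classical
  induction T using Finset.induction_on generalizing U V with
  | empty => exact ⟨U, V, hU, hUne, le_refl _, hV, hVne, le_refl _, by simp⟩
  | @insert m T hm ih =>
    obtain ⟨U₁, V₁, hU₁, hU₁ne, hU₁s, hV₁, hV₁ne, hV₁s, hkill⟩ :=
      kill_one f hcont hwm hab m hU hUne hV hVne
    obtain ⟨U', V', hU', hU'ne, hU's, hV', hV'ne, hV's, hkill'⟩ :=
      ih hU₁ hU₁ne hV₁ hV₁ne
    refine ⟨U', V', hU', hU'ne, hU's.trans hU₁s, hV', hV'ne, hV's.trans hV₁s, ?_⟩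
    intro n hn
    rcases Finset.mem_insert.mp hn with rfl | hn
    · exact Set.eq_empty_of_subset_empty
        (hkill ▸ Set.inter_subset_inter (Set.image_mono hU's) hV's)
    · exact hkill' n hn

theorem weaklyMixing_hitting_sets_infinite {X : Type*} [MetricSpace X] [CompactSpace X]
    (f : ℕ → X → X) (hcont : ∀ n : ℕ, 1 ≤ n → Continuous (f n))
    (hwm : NDSWeaklyMixing f) :
    ∀ U₁ U₂ V₁ V₂ : Set X, IsOpen U₁ → U₁.Nonempty → IsOpen U₂ → U₂.Nonempty →
      IsOpen V₁ → V₁.Nonempty → IsOpen V₂ → V₂.Nonempty →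
      {n : ℕ | 0 < n ∧ (nds f 1 n '' U₁ ∩ V₁).Nonempty ∧
        (nds f 1 n '' U₂ ∩ V₂).Nonempty}.Infinite := by
  intro U₁ U₂ V₁ V₂ hU₁ hU₁ne hU₂ hU₂ne hV₁ hV₁ne hV₂ hV₂ne
  by_cases hsub : ∀ a b : X, a = b
  · -- `X` is a subsingleton: every positive time is a hit.
    have hsup : {n : ℕ | 0 < n} ⊆ {n : ℕ | 0 < n ∧ (nds f 1 n '' U₁ ∩ V₁).Nonempty ∧
        (nds f 1 n '' U₂ ∩ V₂).Nonempty} := by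
      intro n hn
      obtain ⟨u₁, hu₁⟩ := hU₁ne
      obtain ⟨u₂, hu₂⟩ := hU₂ne
      obtain ⟨v₁, hv₁⟩ := hV₁ne
      obtain ⟨v₂, hv₂⟩ := hV₂ne
      exact ⟨hn, ⟨v₁, ⟨u₁, hu₁, hsub _ _⟩, hv₁⟩, ⟨v₂, ⟨u₂, hu₂, hsub _ _⟩, hv₂⟩⟩
    exact Set.Infinite.mono hsup (Set.Ioi_infinite 0)
  · push_neg at hsub
    obtain ⟨a, b, hab⟩ := hsub
    by_contra hinf
    have hfin := Set.not_infinite.mp hinf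
    obtain ⟨U', V', hU', hU'ne, hU's, hV', hV'ne, hV's, hkill⟩ :=
      kill_all f hcont hwm hab hfin.toFinset hU₁ hU₁ne hV₁ hV₁ne
    obtain ⟨n, hn, h1, h2⟩ := hwm U' U₂ V' V₂ hU' hU'ne hU₂ hU₂ne hV' hV'ne hV₂ hV₂ne
    have hmem : n ∈ hfin.toFinset := by
      rw [Set.Finite.mem_toFinset]
      refine ⟨hn, h1.mono (Set.inter_subset_inter (Set.image_mono hU's) hV's), h2⟩
    rw [hkill n hmem] at h1
    exact Set.not_nonempty_empty h1
end

section
/- Let (X,d) be a compact metric space and let (X, f_{1,∞}) be a non-autonomous discrete system. If f_{1,∞} is mildly mixing, then f_{1,∞} is mixing. -/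
open Set Filter

universe uBP in
/-- A two-point space, universe polymorphic. -/
structure BP : Type uBP where
  val : Bool

noncomputable instance : MetricSpace BP.{uBP} :=
  MetricSpace.induced (fun b => if b.val then (1:ℝ) else 0)
    (by rintro ⟨a⟩ ⟨b⟩ h; cases a <;> cases b <;> simp_all) inferInstance

instance : Finite BP.{uBP} :=
  Finite.of_injective (·.val) (by rintro ⟨a⟩ ⟨b⟩ h; simpa using h)

instance : Nonempty BP.{uBP} := ⟨⟨true⟩⟩

lemma nds_prod_aux {X Y : Type*} (f : ℕ → X → X) (g : ℕ → Y → Y) (i n : ℕ) (p : X × Y) :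
    nds (fun n (q : X × Y) => (f n q.1, g n q.2)) i n p = (nds f i n p.1, nds g i n p.2) := by
  induction n with
  | zero => rfl
  | succ n ih => simp [nds, ih]

theorem mildlyMixing_implies_mixing {X : Type*} [MetricSpace X] [CompactSpace X]
    (f : ℕ → X → X) (hcont : ∀ n : ℕ, 1 ≤ n → Continuous (f n))
    (hmm : NDSMildlyMixing f) :
    NDSMixing f := by
  classical
  intro U V hU hUne hV hVne
  by_contra hmix
  push_neg at hmix
  -- P n : the NDS hits V from U at time n
  set P : ℕ → Prop := fun n => (nds f 1 n '' U ∩ V).Nonempty with hP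
  have hmiss : ∀ N : ℕ, ∃ n, N ≤ n ∧ ¬ P n := by
    intro N
    obtain ⟨n, hn, hnot⟩ := hmix N
    refine ⟨n, hn, ?_⟩
    show ¬ (nds f 1 n '' U ∩ V).Nonempty
    rw [hnot]
    exact Set.not_nonempty_empty
  -- Step 1: some hit time exists: product with the swap system on BP.
  have hswap_trans : NDSTransitive (fun _ (b : BP) => BP.mk (!b.val)) := by
    intro U' V' _ hU'ne _ hV'ne
    obtain ⟨b, hb⟩ := hU'ne
    obtain ⟨c, hc⟩ := hV'ne
    by_cases hbc : c.val = !b.val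
    · refine ⟨1, one_pos, ⟨c, ⟨b, hb, ?_⟩, hc⟩⟩
      simp only [nds, Function.comp_apply, id_eq]
      cases c; cases b; simp_all
    · have hcb : c.val = b.val := by
        cases hb' : b.val <;> cases hc' : c.val <;> simp_all
      refine ⟨2, by norm_num, ⟨c, ⟨b, hb, ?_⟩, hc⟩⟩
      simp only [nds, Function.comp_apply, id_eq, Bool.not_not]
      cases c; cases b; simp_all
  have hex : ∃ n, 0 < n ∧ P n := by
    have hpt := hmm BP (fun _ b => BP.mk (!b.val))
      (fun _ _ => continuous_of_discreteTopology) hswap_trans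
      (U ×ˢ (univ : Set BP)) (V ×ˢ (univ : Set BP))
      (hU.prod isOpen_univ) (hUne.prod univ_nonempty)
      (hV.prod isOpen_univ) (hVne.prod univ_nonempty)
    obtain ⟨n, hn, ⟨p, ⟨q, hq, hqp⟩, hpV⟩⟩ := hpt
    have hqp' := (nds_prod_aux f (fun _ (b : BP) => BP.mk (!b.val)) 1 n q).symm.trans hqp
    exact ⟨n, hn, ⟨p.1, ⟨q.1, hq.1, congrArg Prod.fst hqp'⟩, hpV.1⟩⟩
  -- Step 2: the two-point system whose composition is `id` exactly at miss times.
  set flag : ℕ → Bool := fun n => decide (n = 0 ∨ ¬ P n) with hflag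
  set g : ℕ → BP → BP :=
    fun n b => BP.mk (if flag n = flag (n - 1) then b.val else !b.val) with hg
  have hflag0 : flag 0 = true := by simp [hflag]
  have hndsg : ∀ (n : ℕ) (b : BP),
      nds g 1 n b = BP.mk (if flag n then b.val else !b.val) := by
    intro n b
    induction n with
    | zero => cases b; simp [nds, hflag0]
    | succ n ih =>
      have h1 : (1 + n : ℕ) = n + 1 := by omega
      have h2 : (n + 1 - 1 : ℕ) = n := by omega
      simp only [nds, Function.comp_apply, ih]
      simp only [hg, h1, h2]
      cases h3 : flag (n + 1) <;> cases h4 : flag n <;> cases hb : b.val <;>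
        simp [h3, h4, hb]
  have hgtrans : NDSTransitive g := by
    intro U' V' _ hU'ne _ hV'ne
    obtain ⟨b, hb⟩ := hU'ne
    obtain ⟨c, hc⟩ := hV'ne
    by_cases hbc : c.val = b.val
    · obtain ⟨n, hn, hnot⟩ := hmiss 1
      refine ⟨n, by omega, ⟨c, ⟨b, hb, ?_⟩, hc⟩⟩
      rw [hndsg]
      have hfn : flag n = true := by simp [hflag, hnot]
      rw [hfn]
      cases c; cases b; simp_all
    · have hcb : c.val = !b.val := by
        cases hb' : b.val <;> cases hc' : c.val <;> simp_all
      obtain ⟨n, hn, hPn⟩ := hex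
      refine ⟨n, hn, ⟨c, ⟨b, hb, ?_⟩, hc⟩⟩
      rw [hndsg]
      have hfn : flag n = false := by
        simp only [hflag, decide_eq_false_iff_not, not_or, not_not]
        exact ⟨by omega, hPn⟩
      rw [hfn]
      cases c; cases b; simp_all
  -- Step 3: apply mild mixing to the product, contradiction.
  have hpt := hmm BP g (fun _ _ => continuous_of_discreteTopology) hgtrans
    (U ×ˢ ({BP.mk true} : Set BP)) (V ×ˢ ({BP.mk true} : Set BP))
    (hU.prod (isOpen_discrete _)) (hUne.prod ⟨BP.mk true, rfl⟩)
    (hV.prod (isOpen_discrete _)) (hVne.prod ⟨BP.mk true, rfl⟩)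
  obtain ⟨n, hn, ⟨p, ⟨q, hq, hqp⟩, hpV⟩⟩ := hpt
  have hqp' := (nds_prod_aux f g 1 n q).symm.trans hqp
  have hPn : P n := ⟨p.1, ⟨q.1, hq.1, congrArg Prod.fst hqp'⟩, hpV.1⟩
  have h2 : nds g 1 n q.2 = p.2 := congrArg Prod.snd hqp' 
  have hq2 : q.2 = BP.mk true := hq.2
  have hp2 : p.2 = BP.mk true := hpV.2
  rw [hndsg, hq2, hp2] at h2
  have hfn : flag n = false := by
    simp only [hflag, decide_eq_false_iff_not, not_or, not_not]
    exact ⟨by omega, hPn⟩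
  rw [hfn] at h2
  simpa using congrArg BP.val h2
end

section
/- Let (X,d) be a compact metric space without isolated points and let (X, f_{1,∞}) be a non-autonomous discrete system such that f_{1,∞} is feeble open, each f_n is surjective, (f_n) converges uniformly to a continuous map f : X → X, and the compositions (f_r^k) converge collectively to (f^k). Then the map f is minimal if and only if f_{1,∞} is minimal. -/
open Set Filter

lemma nds_add {X : Type*} (f : ℕ → X → X) (i m k : ℕ) :
    nds f i (m + k) = nds f (i + m) k ∘ nds f i m := by
  induction k with
  | zero => rfl
  | succ k ih =>
    show f (i + (m + k)) ∘ nds f i (m + k) = _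
    rw [ih, ← add_assoc]
    rfl

lemma nds_surj {X : Type*} (f : ℕ → X → X)
    (hsurj : ∀ n : ℕ, 1 ≤ n → Function.Surjective (f n)) (m : ℕ) :
    Function.Surjective (nds f 1 m) := by
  induction m with
  | zero => exact fun x => ⟨x, rfl⟩
  | succ m ih =>
    exact (hsurj (1 + m) (Nat.le_add_right 1 m)).comp ih

lemma open_diff_finite_nonempty {X : Type*} [MetricSpace X]
    (hX : ∀ x : X, ¬IsOpen ({x} : Set X))
    {U S : Set X} (hU : IsOpen U) (hUne : U.Nonempty) (hS : S.Finite) :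
    (U \ S).Nonempty := by
  by_contra h
  rw [Set.not_nonempty_iff_eq_empty, Set.diff_eq_empty] at h
  have hUfin : U.Finite := hS.subset h
  obtain ⟨x, hx⟩ := hUne
  apply hX x
  have : ({x} : Set X) = U ∩ (U \ {x})ᶜ := by
    ext y
    constructor
    · rintro rfl; exact ⟨hx, by simp⟩
    · rintro ⟨hyU, hy⟩
      simp only [Set.mem_compl_iff, Set.mem_diff, Set.mem_singleton_iff, not_and, not_not] at hy
      exact hy hyU
  rw [this]
  exact hU.inter ((hUfin.diff (t := {x})).isClosed).isOpen_compl

theorem minimal_iff_limit_minimal {X : Type*} [MetricSpace X] [CompactSpace X]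
    (hX : ∀ x : X, ¬IsOpen ({x} : Set X))
    (f : ℕ → X → X) (F : X → X)
    (hcont : ∀ n : ℕ, 1 ≤ n → Continuous (f n))
    (hfo : FeebleOpen f)
    (hsurj : ∀ n : ℕ, 1 ≤ n → Function.Surjective (f n))
    (hF : Continuous F)
    (hunif : TendstoUniformly (fun n x => f n x) F Filter.atTop)
    (hcoll : CollectivelyConverges f F) :
    MapMinimal F ↔ NDSMinimal f := by
  constructor
  · -- F minimal → NDS minimal
    intro hmin x
    rw [Metric.dense_iff]
    intro y ε hε
    obtain ⟨r₀, hr₀⟩ := hcoll (ε / 2) (by linarith)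
    set r := max r₀ 1 with hr
    have hr1 : 1 ≤ r := le_max_right _ _
    set z := nds f 1 (r - 1) x with hz
    -- the orbit of F z is dense
    obtain ⟨w, hw, m, hm⟩ := Metric.dense_iff.mp (hmin (F z)) y (ε / 2) (by linarith)
    have hwz : w = F^[m + 1] z := by
      rw [← hm, Function.iterate_succ_apply]
    refine ⟨nds f 1 ((r - 1) + (m + 1)) x, ?_, ⟨(r - 1) + (m + 1), rfl⟩⟩
    have hcomp : nds f 1 ((r - 1) + (m + 1)) x = nds f r (m + 1) z := by
      rw [nds_add]
      simp only [Function.comp_apply, ← hz]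
      congr 1
      omega
    rw [hcomp]
    have hd := hr₀ r (le_max_left _ _) (m + 1) (Nat.le_add_left 1 m) z
    rw [Metric.mem_ball] at hw ⊢
    calc dist (nds f r (m + 1) z) y ≤ dist (nds f r (m + 1) z) (F^[m+1] z) + dist (F^[m+1] z) y :=
          dist_triangle _ _ _
      _ < ε / 2 + ε / 2 := by
          apply add_lt_add hd
          rw [← hwz]; exact hw
      _ = ε := by ring
  · -- NDS minimal → F minimal
    intro hmin z
    rw [Metric.dense_iff]
    intro y ε hε
    obtain ⟨r₀, hr₀⟩ := hcoll (ε / 2) (by linarith)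
    set r := max r₀ 1 with hr
    have hr1 : 1 ≤ r := le_max_right _ _
    obtain ⟨x, hx⟩ := nds_surj f hsurj (r - 1) z
    set S : Set X := (fun m => nds f 1 m x) '' {m | m < r} with hS
    have hSfin : S.Finite := (Set.finite_Iio r).image _
    have hVne : ((Metric.ball y (ε / 2)) \ S).Nonempty :=
      open_diff_finite_nonempty hX Metric.isOpen_ball
        (Metric.nonempty_ball.mpr (by linarith)) hSfin
    have hVopen : IsOpen ((Metric.ball y (ε / 2)) \ S) :=
      Metric.isOpen_ball.sdiff hSfin.isClosed
    obtain ⟨w, hwV, n, hn⟩ := (hmin x).inter_open_nonempty _ hVopen hVne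
    have hnr : r ≤ n := by
      by_contra hc
      push_neg at hc
      exact hwV.2 ⟨n, hc, hn⟩
    set k := n - (r - 1) with hk
    have hk1 : 1 ≤ k := by omega
    have hnk : n = (r - 1) + k := by omega
    have hcomp : nds f 1 n x = nds f r k z := by
      rw [hnk, nds_add]
      simp only [Function.comp_apply, hx]
      congr 2
      omega
    have hd := hr₀ r (le_max_left _ _) k hk1 z
    refine ⟨F^[k] z, ?_, ⟨k, rfl⟩⟩
    rw [Metric.mem_ball]
    have hw2 : dist w y < ε / 2 := Metric.mem_ball.mp hwV.1
    calc dist (F^[k] z) y ≤ dist (F^[k] z) (nds f r k z) + dist (nds f r k z) y :=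
          dist_triangle _ _ _
      _ < ε / 2 + ε / 2 := by
          apply add_lt_add
          · rw [dist_comm]; exact hd
          · rw [← hcomp]
            have hn' : nds f 1 n x = w := hn
            rw [hn']; exact hw2
      _ = ε := by ring
end
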